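/- Let X, Y be two separable complete metric spaces and p, q ∈ [1, +∞). If X Hölder(p/q) embeds into ℓ_q(Y, y*) for some y* ∈ Y^ℕ, then E(X; p) is Borel reducible to E(Y; q). -/

import Mathlib

/-- `E` is Borel reducible to `F` (w.r.t. the Borel σ-algebras of the topologies). -/
def BorelReducible {α β : Type*} [TopologicalSpace α] [TopologicalSpace β]
    (E : α → α → Prop) (F : β → β → Prop) : Prop :=
  ∃ θ : α → β, @Measurable α β (borel α) (borel β) θ ∧ ∀ x y, E x y ↔ F (θ x) (θ y)

private lemma rpow_add_bound {q a b c : ℝ} (hq : 0 ≤ q) (ha : 0 ≤ a) (hb : 0 ≤ b)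
    (hc : 0 ≤ c) (h : c ≤ a + b) : c ^ q ≤ 2 ^ q * (a ^ q + b ^ q) := by
  have h1 : c ≤ 2 * max a b := by
    rcases le_total a b with hab | hab
    · calc c ≤ a + b := h
        _ ≤ 2 * max a b := by rw [max_eq_right hab]; linarith
    · calc c ≤ a + b := h
        _ ≤ 2 * max a b := by rw [max_eq_left hab]; linarith
  calc c ^ q ≤ (2 * max a b) ^ q := Real.rpow_le_rpow hc h1 hq
    _ = 2 ^ q * (max a b) ^ q := Real.mul_rpow (by norm_num) (le_trans ha (le_max_left a b))
    _ ≤ 2 ^ q * (a ^ q + b ^ q) := by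
        have : (max a b) ^ q ≤ a ^ q + b ^ q := by
          rcases max_cases a b with ⟨hm, _⟩ | ⟨hm, _⟩
          · rw [hm]; exact le_add_of_nonneg_right (Real.rpow_nonneg hb q)
          · rw [hm]; exact le_add_of_nonneg_left (Real.rpow_nonneg ha q)
        have h2 : (0:ℝ) ≤ 2 ^ q := Real.rpow_nonneg (by norm_num) q
        nlinarith

theorem stmt6
    {X Y : Type*} [MetricSpace X] [TopologicalSpace.SeparableSpace X] [CompleteSpace X]
    [MetricSpace Y] [TopologicalSpace.SeparableSpace Y] [CompleteSpace Y]
    (p q : ℝ) (hp : 1 ≤ p) (hq : 1 ≤ q)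
    -- `X` Hölder(p/q) embeds into `ℓ_q(Y, y*)` for some `y* ∈ Y^ℕ`:
    (hembed : ∃ ystar : ℕ → Y, ∃ A : ℝ, 0 < A ∧ ∃ T : X → ℕ → Y,
      (∀ u, Summable fun n => dist (T u n) (ystar n) ^ q) ∧
      ∀ u v,
        A⁻¹ * dist u v ^ (p / q) ≤ (∑' n, dist (T u n) (T v n) ^ q) ^ (1 / q) ∧
        (∑' n, dist (T u n) (T v n) ^ q) ^ (1 / q) ≤ A * dist u v ^ (p / q)) :
    BorelReducible
      (fun x y : ℕ → X => Summable fun n => dist (x n) (y n) ^ p)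
      (fun x y : ℕ → Y => Summable fun n => dist (x n) (y n) ^ q) := by
  obtain ⟨ystar, A, hA, T, hTsum, hT⟩ := hembed
  have hq0 : (0:ℝ) < q := lt_of_lt_of_le one_pos hq
  have hq0' : q ≠ 0 := ne_of_gt hq0
  have hpq0 : 0 < p / q := div_pos (lt_of_lt_of_le one_pos hp) hq0
  -- summability of coordinate-wise distances between T u and T v
  have hsumd : ∀ u v : X, Summable fun k => dist (T u k) (T v k) ^ q := by
    intro u v
    apply Summable.of_nonneg_of_le
      (fun k => Real.rpow_nonneg dist_nonneg q)
      (fun k => rpow_add_bound hq0.le dist_nonneg dist_nonneg dist_nonneg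
        (dist_triangle (T u k) (ystar k) (T v k)))
    exact (((hTsum u).add ((hTsum v).congr (fun k => by rw [dist_comm]))).mul_left _)
  -- each coordinate map is Hölder continuous
  have hcoord : ∀ u v : X, ∀ k, dist (T u k) (T v k) ≤ A * dist u v ^ (p / q) := by
    intro u v k
    have h1 : dist (T u k) (T v k) ^ q ≤ ∑' n, dist (T u n) (T v n) ^ q :=
      Summable.le_tsum (hsumd u v) k (fun j _ => Real.rpow_nonneg dist_nonneg q)
    have h2 : (dist (T u k) (T v k) ^ q) ^ (1/q) ≤ (∑' n, dist (T u n) (T v n) ^ q) ^ (1/q) :=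
      Real.rpow_le_rpow (Real.rpow_nonneg dist_nonneg q) h1 (by positivity)
    rw [one_div, Real.rpow_rpow_inv dist_nonneg hq0'] at h2
    exact h2.trans (by simpa [one_div] using (hT u v).2)
  have hcont : ∀ k, Continuous fun u : X => T u k := by
    intro k
    rw [continuous_iff_continuousAt]
    intro u0
    rw [ContinuousAt, tendsto_iff_dist_tendsto_zero]
    have hub : Filter.Tendsto (fun v => A * dist v u0 ^ (p / q)) (nhds u0) (nhds 0) := by
      have hd : Filter.Tendsto (fun v : X => dist v u0) (nhds u0) (nhds 0) := by
        simpa using (continuous_id.dist (continuous_const (y := u0))).tendsto u0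
      have : Filter.Tendsto (fun v : X => dist v u0 ^ (p / q)) (nhds u0) (nhds 0) := by
        have := (Real.continuousAt_rpow_const 0 (p / q) (Or.inr hpq0.le)).tendsto.comp hd
        simpa [Function.comp_def, Real.zero_rpow (ne_of_gt hpq0)] using this
      simpa using this.const_mul A
    exact squeeze_zero (fun v => dist_nonneg) (fun v => hcoord v u0 k) hub
  -- the reduction
  set e : ℕ ≃ ℕ × ℕ := (Denumerable.eqv (ℕ × ℕ)).symm with he
  refine ⟨fun x m => T (x (e m).1) (e m).2, ?_, ?_⟩
  · apply Continuous.borel_measurable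
    exact continuous_pi fun m => (hcont (e m).2).comp (continuous_apply (e m).1)
  · intro x y
    -- bounds on the inner sums
    have hnn : ∀ n, (0:ℝ) ≤ ∑' k, dist (T (x n) k) (T (y n) k) ^ q :=
      fun n => tsum_nonneg fun k => Real.rpow_nonneg dist_nonneg q
    have hup : ∀ n, (∑' k, dist (T (x n) k) (T (y n) k) ^ q) ≤ A ^ q * dist (x n) (y n) ^ p := by
      intro n
      have h2 := Real.rpow_le_rpow (Real.rpow_nonneg (hnn n) _) (hT (x n) (y n)).2 hq0.le
      rw [one_div, Real.rpow_inv_rpow (hnn n) hq0',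
        Real.mul_rpow hA.le (Real.rpow_nonneg dist_nonneg _),
        ← Real.rpow_mul dist_nonneg, div_mul_cancel₀ p hq0'] at h2
      exact h2
    have hlow : ∀ n, dist (x n) (y n) ^ p ≤ A ^ q * ∑' k, dist (T (x n) k) (T (y n) k) ^ q := by
      intro n
      have h1 : dist (x n) (y n) ^ (p / q) ≤
          A * (∑' k, dist (T (x n) k) (T (y n) k) ^ q) ^ (1 / q) := by
        have := (hT (x n) (y n)).1
        calc dist (x n) (y n) ^ (p / q)
            = A * (A⁻¹ * dist (x n) (y n) ^ (p / q)) := by field_simp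
          _ ≤ A * (∑' k, dist (T (x n) k) (T (y n) k) ^ q) ^ (1 / q) := by
              exact mul_le_mul_of_nonneg_left this hA.le
      have h2 := Real.rpow_le_rpow (Real.rpow_nonneg dist_nonneg _) h1 hq0.le
      rw [← Real.rpow_mul dist_nonneg, div_mul_cancel₀ p hq0',
        Real.mul_rpow hA.le (Real.rpow_nonneg (hnn n) _),
        one_div, Real.rpow_inv_rpow (hnn n) hq0'] at h2
      exact h2
    -- summability over the product
    have key : (Summable fun n => dist (x n) (y n) ^ p) ↔
        Summable fun n => ∑' k, dist (T (x n) k) (T (y n) k) ^ q := by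
      constructor
      · intro h
        exact Summable.of_nonneg_of_le hnn hup (h.mul_left _)
      · intro h
        exact Summable.of_nonneg_of_le (fun n => Real.rpow_nonneg dist_nonneg p) hlow
          (h.mul_left _)
    have hprod : (Summable fun nk : ℕ × ℕ => dist (T (x nk.1) nk.2) (T (y nk.1) nk.2) ^ q) ↔
        Summable fun n => ∑' k, dist (T (x n) k) (T (y n) k) ^ q := by
      rw [summable_prod_of_nonneg (fun nk => Real.rpow_nonneg dist_nonneg q)]
      exact ⟨fun h => h.2, fun h => ⟨fun n => hsumd (x n) (y n), h⟩⟩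
    have hflat : (Summable fun m => dist (T (x (e m).1) (e m).2) (T (y (e m).1) (e m).2) ^ q) ↔
        Summable fun nk : ℕ × ℕ => dist (T (x nk.1) nk.2) (T (y nk.1) nk.2) ^ q :=
      e.summable_iff (f := fun nk : ℕ × ℕ => dist (T (x nk.1) nk.2) (T (y nk.1) nk.2) ^ q)
    simp only [key, hprod.symm, hflat.symm]
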